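/- Let Γ be a nonempty closed convex set of measures on a finite set S (viewed as a subset of ℝ^{|S|} with nonnegative coordinates), and let μ̃ be a measure with strictly positive coordinates. Then the Bregman projection Π_Γ μ̃ = argmin_{μ ∈ Γ} KL(μ‖μ̃) exists, and for every ν ∈ Γ the Pythagorean-type inequality KL(ν‖μ̃) ≥ KL(ν‖Π_Γ μ̃) + KL(Π_Γ μ̃‖μ̃) holds. -/

import Mathlib

open Filter Topology

/-- Generalized KL divergence between nonnegative measures on a finite set,
    with the convention 0·ln 0 = 0 (note `Real.log 0 = 0` in Mathlib). -/
noncomputable def genKL {S : Type*} [Fintype S] (μ ν : S → ℝ) : ℝ :=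
  ∑ x, (μ x * Real.log (μ x / ν x) - μ x + ν x)

/-- The integrand of the KL divergence, in expanded form. -/
noncomputable def phiKL (c u : ℝ) : ℝ := u * Real.log u - u * Real.log c - u + c

lemma phiKL_eq (c u : ℝ) (hc : c ≠ 0) :
    u * Real.log (u / c) - u + c = phiKL c u := by
  rcases eq_or_ne u 0 with h0 | h0
  · simp [phiKL, h0]
  · rw [Real.log_div h0 hc]; simp only [phiKL]; ring

lemma phiKL_nonneg {c u : ℝ} (hc : 0 < c) (hu : 0 ≤ u) : 0 ≤ phiKL c u := by
  rcases eq_or_lt_of_le hu with h0 | h0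
  · simp [phiKL, ← h0]; positivity
  · have h1 : Real.log (c / u) ≤ c / u - 1 := Real.log_le_sub_one_of_pos (by positivity)
    have h2 : Real.log (c / u) = Real.log c - Real.log u := Real.log_div hc.ne' h0.ne'
    have h3 : u * Real.log (c / u) ≤ u * (c / u - 1) :=
      mul_le_mul_of_nonneg_left h1 h0.le
    have h4 : u * (c / u - 1) = c - u := by field_simp
    rw [h2, h4] at h3
    unfold phiKL; nlinarith

lemma phiKL_coercive {c u : ℝ} (hc : 0 < c) (hu : Real.exp 2 * c ≤ u) : u ≤ phiKL c u := by
  have hu0 : 0 < u := lt_of_lt_of_le (by positivity) hu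
  have h1 : Real.log (Real.exp 2 * c) ≤ Real.log u := Real.log_le_log (by positivity) hu
  rw [Real.log_mul (Real.exp_pos 2).ne' hc.ne', Real.log_exp] at h1
  unfold phiKL; nlinarith

lemma phiKL_hasDerivAt (c px dx : ℝ) (hpx : px ≠ 0) :
    HasDerivAt (fun t => phiKL c (px + t * dx)) (dx * (Real.log px - Real.log c)) 0 := by
  have haff : HasDerivAt (fun t : ℝ => px + t * dx) dx 0 := by
    simpa using ((hasDerivAt_id (0:ℝ)).mul_const dx).const_add px
  have hmul : HasDerivAt (fun u : ℝ => u * Real.log u) (Real.log px + 1)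
      ((fun t : ℝ => px + t * dx) 0) := by
    simpa using Real.hasDerivAt_mul_log hpx
  have hcomp : HasDerivAt (fun t => (px + t * dx) * Real.log (px + t * dx))
      ((Real.log px + 1) * dx) 0 := HasDerivAt.comp (h := fun t : ℝ => px + t * dx) 0 hmul haff
  have h := ((hcomp.sub (haff.mul_const (Real.log c))).sub haff).add_const c
  have : dx * (Real.log px - Real.log c) = (Real.log px + 1) * dx - dx * Real.log c - dx := by
    ring
  rw [this]
  exact h

lemma phiKL_scale (c v t : ℝ) (ht : t ≠ 0) :
    phiKL c (t * v) = t * (v * (Real.log t + Real.log v - Real.log c - 1)) + c := by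
  rcases eq_or_ne v 0 with hv | hv
  · simp [phiKL, hv]
  · unfold phiKL; rw [Real.log_mul ht hv]; ring

/-- Key first-order optimality fact: at a minimizer `p` of the KL divergence over a
convex set, the support condition holds and the linearized term is nonnegative. -/
lemma bregman_key {S : Type*} [Fintype S] (Γ : Set (S → ℝ)) (hconvex : Convex ℝ Γ)
    (hnonneg : ∀ μ ∈ Γ, ∀ x, 0 ≤ μ x)
    (μt : S → ℝ)
    (p : S → ℝ) (hp : p ∈ Γ)
    (hmin : ∀ ν ∈ Γ, (∑ x, phiKL (μt x) (p x)) ≤ ∑ x, phiKL (μt x) (ν x))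
    (ν : S → ℝ) (hν : ν ∈ Γ) :
    (∀ x, p x = 0 → ν x = 0) ∧
      0 ≤ ∑ x, (ν x - p x) * (Real.log (p x) - Real.log (μt x)) := by
  classical
  set P : Finset S := Finset.univ.filter (fun x => p x ≠ 0) with hP
  have hPc : ∀ x ∈ Pᶜ, p x = 0 := by
    intro x hx
    have := Finset.mem_compl.mp hx
    simpa [hP] using this
  set A : ℝ → ℝ := fun t => ∑ x ∈ P, phiKL (μt x) (p x + t * (ν x - p x)) with hA
  set L : ℝ := ∑ x ∈ P, (ν x - p x) * (Real.log (p x) - Real.log (μt x)) with hL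
  set a : ℝ := ∑ x ∈ Pᶜ, ν x with ha
  set C : ℝ := ∑ x ∈ Pᶜ, ν x * (Real.log (ν x) - Real.log (μt x) - 1) with hC
  have hAderiv : HasDerivAt A L 0 := by
    apply HasDerivAt.fun_sum
    intro x hx
    exact phiKL_hasDerivAt (μt x) (p x) (ν x - p x) (by simpa [hP] using hx)
  have hslope : Tendsto (fun t => (A t - A 0) / t) (𝓝[>] 0) (𝓝 L) := by
    have h1 := (hasDerivAt_iff_tendsto_slope.mp hAderiv).mono_left
      (nhdsWithin_mono 0 (fun t ht => ne_of_gt ht))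
    have h2 : (fun t => (A t - A 0) / t) = slope A 0 := by
      funext t; simp [slope_def_field]
    rw [h2]; exact h1
  -- the eventual nonnegativity of slopes
  have hev : ∀ᶠ t in 𝓝[>] (0:ℝ), 0 ≤ (A t - A 0) / t + (a * Real.log t + C) := by
    filter_upwards [Ioc_mem_nhdsGT_of_mem (Set.left_mem_Ico.mpr one_pos)] with t ht
    obtain ⟨ht0, ht1⟩ := ht
    have hmem : (fun x => p x + t * (ν x - p x)) ∈ Γ := by
      have h := hconvex hp hν (sub_nonneg.mpr ht1) ht0.le (by ring)
      convert h using 1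
      funext x
      simp only [Pi.add_apply, Pi.smul_apply, smul_eq_mul]
      ring
    have hle := hmin _ hmem
    have hsplit1 : (∑ x, phiKL (μt x) (p x)) = A 0 + ∑ x ∈ Pᶜ, μt x := by
      rw [hA]
      simp only [zero_mul, add_zero]
      rw [← Finset.sum_add_sum_compl P (fun x => phiKL (μt x) (p x))]
      congr 1
      apply Finset.sum_congr rfl
      intro x hx
      rw [hPc x hx]
      simp [phiKL]
    have hsplit2 : (∑ x, phiKL (μt x) (p x + t * (ν x - p x)))
        = A t + (t * (a * Real.log t + C) + ∑ x ∈ Pᶜ, μt x) := by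
      rw [hA, ← Finset.sum_add_sum_compl P (fun x => phiKL (μt x) (p x + t * (ν x - p x)))]
      congr 1
      have : ∀ x ∈ Pᶜ, phiKL (μt x) (p x + t * (ν x - p x))
          = t * (ν x * (Real.log t + Real.log (ν x) - Real.log (μt x) - 1)) + μt x := by
        intro x hx
        rw [hPc x hx]
        simp only [sub_zero, zero_add]
        exact phiKL_scale (μt x) (ν x) t ht0.ne'
      rw [Finset.sum_congr rfl this, Finset.sum_add_distrib]
      congr 1
      rw [ha, hC]
      simp only [mul_add, Finset.sum_mul, Finset.mul_sum, ← Finset.sum_add_distrib]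
      apply Finset.sum_congr rfl
      intro x _
      ring
    rw [hsplit1, hsplit2] at hle
    have h3 : 0 ≤ (A t - A 0) + t * (a * Real.log t + C) := by linarith
    have h4 : 0 ≤ ((A t - A 0) + t * (a * Real.log t + C)) / t := div_nonneg h3 ht0.le
    rwa [add_div, mul_div_cancel_left₀ _ ht0.ne'] at h4
  -- a = 0
  have hanonneg : 0 ≤ a := Finset.sum_nonneg fun x _ => hnonneg ν hν x
  have ha0 : a = 0 := by
    by_contra hne
    have hapos : 0 < a := lt_of_le_of_ne hanonneg (Ne.symm hne)
    have h1 : Tendsto (fun t : ℝ => a * Real.log t) (𝓝[>] 0) atBot :=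
      Tendsto.const_mul_atBot hapos Real.tendsto_log_nhdsGT_zero
    have h2 : Tendsto (fun t : ℝ => a * Real.log t + C) (𝓝[>] 0) atBot :=
      tendsto_atBot_add_const_right _ C h1
    have h3 : Tendsto (fun t => (A t - A 0) / t + (a * Real.log t + C)) (𝓝[>] 0) atBot :=
      hslope.add_atBot h2
    obtain ⟨t, hge, hlt⟩ := (hev.and (h3.eventually_lt_atBot 0)).exists
    linarith
  have hzero : ∀ x, p x = 0 → ν x = 0 := by
    intro x hx
    have hxPc : x ∈ Pᶜ := Finset.mem_compl.mpr (by simp [hP, hx])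
    have hs : ∑ i ∈ Pᶜ, ν i = 0 := by rw [← ha]; exact ha0
    exact (Finset.sum_eq_zero_iff_of_nonneg (fun i (_ : i ∈ Pᶜ) => hnonneg ν hν i)).mp
      hs x hxPc
  have hC0 : C = 0 := Finset.sum_eq_zero fun x hx => by
    rw [hzero x (hPc x hx)]; ring
  have hLnn : 0 ≤ L := by
    refine ge_of_tendsto hslope ?_
    filter_upwards [hev] with t ht
    simpa [ha0, hC0] using ht
  refine ⟨hzero, ?_⟩
  have : ∑ x, (ν x - p x) * (Real.log (p x) - Real.log (μt x)) = L := by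
    rw [hL]
    symm
    apply Finset.sum_subset (Finset.subset_univ P)
    intro x _ hx
    have hpx : p x = 0 := by
      by_contra h
      exact hx (Finset.mem_filter.mpr ⟨Finset.mem_univ x, h⟩)
    rw [hpx, hzero x hpx]
    ring
  rw [this]; exact hLnn

/-- Bregman projection onto a nonempty closed convex set Γ of measures exists, and
    satisfies the Pythagorean inequality KL(ν‖μ̃) ≥ KL(ν‖Π_Γ μ̃) + KL(Π_Γ μ̃‖μ̃)
    for every ν ∈ Γ. -/
theorem bregman_projection_exists_and_pythagorean
    {S : Type*} [Fintype S] (Γ : Set (S → ℝ))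
    (hne : Γ.Nonempty) (hclosed : IsClosed Γ) (hconvex : Convex ℝ Γ)
    (hnonneg : ∀ μ ∈ Γ, ∀ x, 0 ≤ μ x)
    (μt : S → ℝ) (hμt : ∀ x, 0 < μt x) :
    ∃ p ∈ Γ, (∀ ν ∈ Γ, genKL p μt ≤ genKL ν μt) ∧
      (∀ ν ∈ Γ, genKL ν p + genKL p μt ≤ genKL ν μt) := by
  classical
  set f : (S → ℝ) → ℝ := fun μ => ∑ x, phiKL (μt x) (μ x) with hf
  have hf_eq : ∀ μ : S → ℝ, genKL μ μt = f μ := fun μ =>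
    Finset.sum_congr rfl fun x _ => phiKL_eq (μt x) (μ x) (hμt x).ne'
  have hfc : Continuous f := by
    apply continuous_finset_sum
    intro x _
    have h1 : Continuous fun μ : S → ℝ => μ x := continuous_apply x
    exact (((Real.continuous_mul_log.comp h1).sub (h1.mul continuous_const)).sub h1).add
      continuous_const
  obtain ⟨μ0, hμ0⟩ := hne
  set K := Γ ∩ {μ | f μ ≤ f μ0} with hK
  have hKclosed : IsClosed K := hclosed.inter (isClosed_le hfc continuous_const)
  have hKsub : K ⊆ Set.Icc (fun _ => 0) (fun x => max (Real.exp 2 * μt x) (f μ0)) := by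
    intro μ hμ
    constructor
    · intro x; exact hnonneg μ hμ.1 x
    · intro x
      have hterm : phiKL (μt x) (μ x) ≤ f μ :=
        Finset.single_le_sum (fun i _ => phiKL_nonneg (hμt i) (hnonneg μ hμ.1 i))
          (Finset.mem_univ x)
      rcases le_total (μ x) (Real.exp 2 * μt x) with h | h
      · exact le_max_of_le_left h
      · exact le_max_of_le_right (le_trans (phiKL_coercive (hμt x) h) (le_trans hterm hμ.2))
  have hKcompact : IsCompact K := isCompact_Icc.of_isClosed_subset hKclosed hKsub
  obtain ⟨p, hpK, hpmin⟩ :=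
    hKcompact.exists_isMinOn ⟨μ0, hμ0, show f μ0 ≤ f μ0 from le_refl _⟩ hfc.continuousOn
  have hpΓ : p ∈ Γ := hpK.1
  have hmin : ∀ ν ∈ Γ, f p ≤ f ν := by
    intro ν hν
    rcases le_total (f ν) (f μ0) with h | h
    · exact hpmin ⟨hν, show f ν ≤ f μ0 from h⟩
    · exact le_trans (hpmin ⟨hμ0, show f μ0 ≤ f μ0 from le_refl _⟩) h
  refine ⟨p, hpΓ, fun ν hν => by rw [hf_eq, hf_eq]; exact hmin ν hν, ?_⟩
  intro ν hν
  obtain ⟨hzero, hLnn⟩ := bregman_key Γ hconvex hnonneg μt p hpΓ hmin ν hν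
  -- expand genKL ν p
  have hνp : genKL ν p = ∑ x, (ν x * Real.log (ν x) - ν x * Real.log (p x) - ν x + p x) := by
    apply Finset.sum_congr rfl
    intro x _
    rcases eq_or_ne (p x) 0 with hpx | hpx
    · rw [hpx, hzero x hpx]; simp
    · exact phiKL_eq (p x) (ν x) hpx
  have hkey : genKL ν μt = genKL ν p + genKL p μt
      + ∑ x, (ν x - p x) * (Real.log (p x) - Real.log (μt x)) := by
    rw [hf_eq ν, hf_eq p, hνp, hf]
    simp only [← Finset.sum_add_distrib]
    apply Finset.sum_congr rfl
    intro x _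
    unfold phiKL
    ring
  rw [hkey]
  linarith
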